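/- Let (A, −) be an associative Λ-torus with involution over a field k of characteristic 0, and suppose the involution is of second kind, i.e. there exists a nonzero homogeneous element s₀ ∈ Z(A) with s̄₀ = −s₀. Then Z(A) ∩ A₋ = s₀ · Z(A,−) and A₋ = s₀ · A₊, where A₊ and A₋ are the +1 and −1 eigenspaces of the involution. Consequently [Γ(A) : Γ(A,−)] = 2, where Γ(A) = supp_Λ(Z(A)) and Γ(A,−) = supp_Λ(Z(A) ∩ A₊). -/

import Mathlib

/-- Let `(A, −)` be an associative `Λ`-torus with a (graded) involution of second kind
over a field of characteristic 0, witnessed by a nonzero homogeneous central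
skew element `s₀`.  Then `Z(A) ∩ A₋ = s₀ Z(A,−)` and `A₋ = s₀ A₊`, and consequently
`[Γ(A) : Γ(A,−)] = 2`, where `Γ(A)` and `Γ(A,−)` are the supports of `Z(A)` and of
`Z(A,−) = Z(A) ∩ A₊` respectively. -/
theorem stmt_7 (k : Type) [Field k] [CharZero k] (Λ : Type) [AddCommGroup Λ]
    [DecidableEq Λ] [Module.Free ℤ Λ] [Module.Finite ℤ Λ]
    (A : Type) [Ring A] [Algebra k A]
    (𝒜 : Λ → Submodule k A) [GradedAlgebra 𝒜]
    (htorus : ∀ lam : Λ, ∃ u : Aˣ, (u : A) ∈ 𝒜 lam ∧ 𝒜 lam = Submodule.span k {(u : A)})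
    (σ : A →ₗ[k] A) (hanti : ∀ x y : A, σ (x * y) = σ y * σ x)
    (hinv : ∀ x : A, σ (σ x) = x)
    (hgr : ∀ lam : Λ, ∀ x ∈ 𝒜 lam, σ x ∈ 𝒜 lam)
    (s₀ : A) (hs₀ne : s₀ ≠ 0) (hs₀c : s₀ ∈ Subalgebra.center k A)
    (hs₀skew : σ s₀ = -s₀) (lam₀ : Λ) (hs₀hom : s₀ ∈ 𝒜 lam₀) :
    ({x : A | x ∈ Subalgebra.center k A ∧ σ x = -x}
        = (fun z => s₀ * z) '' {x : A | x ∈ Subalgebra.center k A ∧ σ x = x}) ∧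
    ({x : A | σ x = -x} = (fun z => s₀ * z) '' {x : A | σ x = x}) ∧
    ∃ G G' : AddSubgroup Λ,
      (G : Set Λ) = {lam : Λ | ∃ z : A, z ∈ Subalgebra.center k A ∧ z ∈ 𝒜 lam ∧ z ≠ 0} ∧
      (G' : Set Λ) = {lam : Λ | ∃ z : A,
          z ∈ Subalgebra.center k A ∧ σ z = z ∧ z ∈ 𝒜 lam ∧ z ≠ 0} ∧
      G' ≤ G ∧ AddSubgroup.relIndex G' G = 2 := by
  classical
  -- A is nontrivial
  have hnt : (1 : A) ≠ 0 := by
    intro h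
    apply hs₀ne
    calc s₀ = s₀ * 1 := (mul_one s₀).symm
      _ = s₀ * 0 := by rw [h]
      _ = 0 := mul_zero _
  haveI : Nontrivial A := nontrivial_of_ne 1 0 hnt
  -- σ 1 = 1
  have hσ1 : σ (1 : A) = 1 := by
    have h := hanti (σ 1) 1
    rw [mul_one, hinv] at h
    simpa using h.symm
  -- scalar cancellation
  have hsmul0 : ∀ (c : k) (x : A), c ≠ 0 → c • x = 0 → x = 0 := by
    intro c x hc h
    have h2 := congrArg (fun y => c⁻¹ • y) h
    simpa [smul_smul, inv_mul_cancel₀ hc] using h2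
  have hhalf : ∀ x : A, x + x = 0 → x = 0 := by
    intro x h
    refine hsmul0 2 x (by norm_num) ?_
    rw [two_smul]; exact h
  -- nonzero homogeneous elements are units
  have hunit : ∀ (lam : Λ) (x : A), x ∈ 𝒜 lam → x ≠ 0 → IsUnit x := by
    intro lam x hx hne
    obtain ⟨u, hu, hspan⟩ := htorus lam
    rw [hspan, Submodule.mem_span_singleton] at hx
    obtain ⟨c, rfl⟩ := hx
    have hc : c ≠ 0 := by rintro rfl; simp at hne
    rw [Algebra.smul_def]
    exact ((isUnit_iff_ne_zero.mpr hc).map (algebraMap k A)).mul u.isUnit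
  -- σ preserves the center
  have hσcen : ∀ z : A, z ∈ Subalgebra.center k A → σ z ∈ Subalgebra.center k A := by
    intro z hz
    rw [Subalgebra.mem_center_iff] at hz ⊢
    intro b
    calc b * σ z = σ (σ b) * σ z := by rw [hinv b]
      _ = σ (z * σ b) := (hanti z (σ b)).symm
      _ = σ (σ b * z) := by rw [← hz (σ b)]
      _ = σ z * σ (σ b) := hanti (σ b) z
      _ = σ z * b := by rw [hinv b]
  -- the inverse of a central unit is central
  have hinvcen : ∀ u : Aˣ, (↑u : A) ∈ Subalgebra.center k A →
      (↑u⁻¹ : A) ∈ Subalgebra.center k A := by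
    intro u hu
    rw [Subalgebra.mem_center_iff] at hu ⊢
    intro b
    have h : (↑u : A) * (b * ↑u⁻¹) = (↑u : A) * (↑u⁻¹ * b) := by
      calc (↑u : A) * (b * ↑u⁻¹) = (↑u * b) * ↑u⁻¹ := (mul_assoc _ _ _).symm
        _ = (b * ↑u) * ↑u⁻¹ := by rw [hu b]
        _ = b * (↑u * ↑u⁻¹) := mul_assoc _ _ _
        _ = b := by rw [u.mul_inv, mul_one]
        _ = (↑u * ↑u⁻¹) * b := by rw [u.mul_inv, one_mul]
        _ = ↑u * (↑u⁻¹ * b) := mul_assoc _ _ _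
    calc b * ↑u⁻¹ = (↑u⁻¹ * ↑u) * (b * ↑u⁻¹) := by rw [u.inv_mul, one_mul]
      _ = ↑u⁻¹ * (↑u * (b * ↑u⁻¹)) := mul_assoc _ _ _
      _ = ↑u⁻¹ * (↑u * (↑u⁻¹ * b)) := by rw [h]
      _ = (↑u⁻¹ * ↑u) * (↑u⁻¹ * b) := (mul_assoc _ _ _).symm
      _ = ↑u⁻¹ * b := by rw [u.inv_mul, one_mul]
  -- σ of the inverse of a σ-fixed unit
  have hσinv : ∀ u : Aˣ, σ ↑u = (↑u : A) → σ ↑u⁻¹ = (↑u⁻¹ : A) := by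
    intro u hu
    have h1 : (↑u : A) * σ ↑u⁻¹ = 1 := by
      have h := hanti (↑u⁻¹ : A) ↑u
      rw [u.inv_mul, hσ1, hu] at h
      exact h.symm
    calc σ (↑u⁻¹ : A) = 1 * σ ↑u⁻¹ := (one_mul _).symm
      _ = (↑u⁻¹ * ↑u) * σ ↑u⁻¹ := by rw [u.inv_mul]
      _ = ↑u⁻¹ * (↑u * σ ↑u⁻¹) := mul_assoc _ _ _
      _ = ↑u⁻¹ * 1 := by rw [h1]
      _ = ↑u⁻¹ := mul_one _
  -- projection of a product with a homogeneous left factor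
  have hproj : ∀ (lam : Λ) (x : A), x ∈ 𝒜 lam → ∀ (ν : Λ) (y : A),
      (DirectSum.decompose 𝒜 (x * y) (lam + ν) : A)
        = x * (DirectSum.decompose 𝒜 y ν : A) := by
    intro lam x hx ν y
    refine DirectSum.Decomposition.inductionOn 𝒜
      (motive := fun y => (DirectSum.decompose 𝒜 (x * y) (lam + ν) : A)
        = x * (DirectSum.decompose 𝒜 y ν : A)) ?_ ?_ ?_ y
    · simp
    · intro μ m
      by_cases hμ : ν = μ
      · subst hμ
        rw [DirectSum.decompose_of_mem_same 𝒜 (SetLike.mul_mem_graded hx m.2),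
          DirectSum.decompose_of_mem_same 𝒜 m.2]
      · rw [DirectSum.decompose_of_mem_ne 𝒜 (SetLike.mul_mem_graded hx m.2)
          (fun h => hμ (by exact (add_right_injective lam h).symm ▸ rfl)),
          DirectSum.decompose_of_mem_ne 𝒜 m.2 (fun h => hμ h.symm), mul_zero]
    · intro y₁ y₂ h1 h2
      rw [mul_add, DirectSum.decompose_add, DirectSum.decompose_add]
      push_cast [DirectSum.add_apply]
      rw [h1, h2, mul_add]
  -- inverses of homogeneous units are homogeneous
  have hinvhom : ∀ (u : Aˣ) (lam : Λ), (↑u : A) ∈ 𝒜 lam → (↑u⁻¹ : A) ∈ 𝒜 (-lam) := by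
    intro u lam hu
    have hzero : ∀ ν : Λ, ν ≠ -lam → (DirectSum.decompose 𝒜 (↑u⁻¹ : A) ν : A) = 0 := by
      intro ν hν
      have h1 := hproj lam ↑u hu ν ↑u⁻¹
      rw [u.mul_inv] at h1
      have h2 : (DirectSum.decompose 𝒜 (1 : A) (lam + ν) : A) = 0 :=
        DirectSum.decompose_of_mem_ne 𝒜 (SetLike.one_mem_graded 𝒜)
          (fun h => hν (eq_neg_of_add_eq_zero_right h.symm))
      rw [h2] at h1
      exact (Units.mul_right_eq_zero u).mp h1.symm
    rw [← DirectSum.sum_support_decompose 𝒜 (↑u⁻¹ : A)]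
    refine Submodule.sum_mem _ ?_
    intro ν _
    by_cases hν : ν = -lam
    · subst hν; exact SetLike.coe_mem _
    · rw [hzero ν hν]; exact Submodule.zero_mem _
  -- s₀ is a unit, with central skew inverse
  obtain ⟨S, hS⟩ := hunit lam₀ s₀ hs₀hom hs₀ne
  set t : A := (↑S⁻¹ : A) with ht
  have hst : s₀ * t = 1 := by rw [← hS]; exact S.mul_inv
  have hts : t * s₀ = 1 := by rw [← hS]; exact S.inv_mul
  have htc : t ∈ Subalgebra.center k A := hinvcen S (by rw [hS]; exact hs₀c)
  have hσt : σ t = -t := by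
    have h1 : -s₀ * σ t = 1 := by
      have h := hanti t s₀
      rw [hts, hσ1, hs₀skew] at h
      exact h.symm
    have h2 : s₀ * σ t = -1 := by
      have := congrArg Neg.neg h1
      rw [neg_mul, neg_neg] at this
      exact this
    calc σ t = 1 * σ t := (one_mul _).symm
      _ = (t * s₀) * σ t := by rw [hts]
      _ = t * (s₀ * σ t) := mul_assoc _ _ _
      _ = t * (-1) := by rw [h2]
      _ = -(t * 1) := by rw [mul_neg]
      _ = -t := by rw [mul_one]
  -- central elements commute
  have hcomm : ∀ z : A, z ∈ Subalgebra.center k A → ∀ b : A, b * z = z * b :=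
    fun z hz => Subalgebra.mem_center_iff.mp hz
  -- Part 1 : Z(A) ∩ A₋ = s₀ • Z(A,−)
  have part1 : {x : A | x ∈ Subalgebra.center k A ∧ σ x = -x}
      = (fun z => s₀ * z) '' {x : A | x ∈ Subalgebra.center k A ∧ σ x = x} := by
    ext x
    constructor
    · rintro ⟨hxc, hxs⟩
      refine ⟨t * x, ⟨mul_mem htc hxc, ?_⟩, ?_⟩
      · show σ (t * x) = t * x
        rw [hanti, hxs, hσt, neg_mul_neg]
        exact hcomm t htc x
      · show s₀ * (t * x) = x
        rw [← mul_assoc, hst, one_mul]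
    · rintro ⟨z, ⟨hzc, hzs⟩, rfl⟩
      refine ⟨mul_mem hs₀c hzc, ?_⟩
      show σ (s₀ * z) = -(s₀ * z)
      rw [hanti, hzs, hs₀skew, mul_neg, hcomm s₀ hs₀c z]
  -- Part 2 : A₋ = s₀ • A₊
  have part2 : {x : A | σ x = -x} = (fun z => s₀ * z) '' {x : A | σ x = x} := by
    ext x
    constructor
    · intro hx
      refine ⟨t * x, ?_, ?_⟩
      · show σ (t * x) = t * x
        rw [hanti, hx, hσt, neg_mul_neg]
        exact hcomm t htc x
      · show s₀ * (t * x) = x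
        rw [← mul_assoc, hst, one_mul]
    · rintro ⟨z, hz, rfl⟩
      show σ (s₀ * z) = -(s₀ * z)
      rw [hanti, hz, hs₀skew, mul_neg, hcomm s₀ hs₀c z]
  refine ⟨part1, part2, ?_⟩
  -- the support subgroups
  let G : AddSubgroup Λ :=
    { carrier := {lam : Λ | ∃ z : A, z ∈ Subalgebra.center k A ∧ z ∈ 𝒜 lam ∧ z ≠ 0}
      zero_mem' := ⟨1, one_mem _, SetLike.one_mem_graded 𝒜, hnt⟩
      add_mem' := by
        rintro a b ⟨z, hz1, hz2, hz3⟩ ⟨w, hw1, hw2, hw3⟩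
        exact ⟨z * w, mul_mem hz1 hw1, SetLike.mul_mem_graded hz2 hw2,
          ((hunit a z hz2 hz3).mul (hunit b w hw2 hw3)).ne_zero⟩
      neg_mem' := by
        rintro a ⟨z, hz1, hz2, hz3⟩
        obtain ⟨u, hu⟩ := hunit a z hz2 hz3
        exact ⟨↑u⁻¹, hinvcen u (by rw [hu]; exact hz1),
          hinvhom u a (by rw [hu]; exact hz2), u⁻¹.isUnit.ne_zero⟩ }
  let G' : AddSubgroup Λ :=
    { carrier := {lam : Λ | ∃ z : A,
        z ∈ Subalgebra.center k A ∧ σ z = z ∧ z ∈ 𝒜 lam ∧ z ≠ 0}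
      zero_mem' := ⟨1, one_mem _, hσ1, SetLike.one_mem_graded 𝒜, hnt⟩
      add_mem' := by
        rintro a b ⟨z, hz1, hzs, hz2, hz3⟩ ⟨w, hw1, hws, hw2, hw3⟩
        refine ⟨z * w, mul_mem hz1 hw1, ?_, SetLike.mul_mem_graded hz2 hw2,
          ((hunit a z hz2 hz3).mul (hunit b w hw2 hw3)).ne_zero⟩
        rw [hanti, hzs, hws]
        exact hcomm z hz1 w
      neg_mem' := by
        rintro a ⟨z, hz1, hzs, hz2, hz3⟩
        obtain ⟨u, hu⟩ := hunit a z hz2 hz3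
        exact ⟨↑u⁻¹, hinvcen u (by rw [hu]; exact hz1),
          hσinv u (by rw [hu]; exact hzs),
          hinvhom u a (by rw [hu]; exact hz2), u⁻¹.isUnit.ne_zero⟩ }
  have hle : G' ≤ G := by
    rintro lam ⟨z, h1, _, h3, h4⟩
    exact ⟨z, h1, h3, h4⟩
  refine ⟨G, G', rfl, rfl, hle, ?_⟩
  have hlam₀G : lam₀ ∈ G := ⟨s₀, hs₀c, hs₀hom, hs₀ne⟩
  -- lam₀ is not in G'
  have hC : lam₀ ∉ G' := by
    rintro ⟨z, hzc, hzσ, hzm, hzne⟩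
    obtain ⟨u, hu, hspan⟩ := htorus lam₀
    have h1 := hs₀hom
    rw [hspan, Submodule.mem_span_singleton] at h1
    obtain ⟨a, ha⟩ := h1
    have h2 := hzm
    rw [hspan, Submodule.mem_span_singleton] at h2
    obtain ⟨b, hb⟩ := h2
    have hbne : b ≠ 0 := by rintro rfl; rw [← hb] at hzne; simp at hzne
    have hs : s₀ = (a * b⁻¹) • z := by
      rw [← hb, ← ha, smul_smul, mul_assoc, inv_mul_cancel₀ hbne, mul_one]
    have hfix : σ s₀ = s₀ := by rw [hs, map_smul, hzσ]
    rw [hs₀skew] at hfix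
    apply hs₀ne
    apply hhalf
    nth_rewrite 1 [← hfix]
    exact neg_add_cancel s₀
  -- every element of G is in G' or in lam₀ + G'
  have hA : ∀ lam : Λ, lam ∈ G → lam ∈ G' ∨ lam + lam₀ ∈ G' := by
    rintro lam ⟨z, hzc, hzm, hzne⟩
    by_cases hp : (2⁻¹ : k) • (z + σ z) = 0
    · right
      have hskew : σ z = -z := by
        have h0 : z + σ z = 0 := hsmul0 _ _ (by norm_num) hp
        rw [add_comm] at h0
        exact eq_neg_of_add_eq_zero_left h0
      refine ⟨s₀ * z, mul_mem hs₀c hzc, ?_, ?_, ?_⟩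
      · rw [hanti, hskew, hs₀skew, neg_mul_neg]
        exact hcomm s₀ hs₀c z
      · have h := SetLike.mul_mem_graded hs₀hom hzm
        rwa [add_comm] at h
      · exact ((hunit _ _ hs₀hom hs₀ne).mul (hunit _ _ hzm hzne)).ne_zero
    · left
      refine ⟨(2⁻¹ : k) • (z + σ z), ?_, ?_, ?_, hp⟩
      · exact Subalgebra.smul_mem _ (add_mem hzc (hσcen z hzc)) _
      · rw [map_smul, map_add, hinv, add_comm]
      · exact Submodule.smul_mem _ _ (add_mem hzm (hgr lam z hzm))
  -- not both
  have hB : ∀ lam : Λ, ¬(lam ∈ G' ∧ lam + lam₀ ∈ G') := by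
    rintro lam ⟨h1, h2⟩
    apply hC
    have h3 := G'.add_mem h2 (G'.neg_mem h1)
    simpa [add_comm, add_left_comm] using h3
  -- conclude the index computation
  show (AddSubgroup.addSubgroupOf G' G).index = 2
  rw [AddSubgroup.index_eq_two_iff]
  refine ⟨⟨lam₀, hlam₀G⟩, ?_⟩
  rintro ⟨lam, hlam⟩
  have hiff1 : ((⟨lam, hlam⟩ + ⟨lam₀, hlam₀G⟩ : G) ∈ G'.addSubgroupOf G)
      ↔ lam + lam₀ ∈ G' := Iff.rfl
  have hiff2 : ((⟨lam, hlam⟩ : G) ∈ G'.addSubgroupOf G) ↔ lam ∈ G' := Iff.rfl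
  rw [Xor] at *
  rcases hA lam hlam with h | h
  · exact Or.inr ⟨hiff2.mpr h, fun hh => hB lam ⟨h, hiff1.mp hh⟩⟩
  · exact Or.inl ⟨hiff1.mpr h, fun hh => hB lam ⟨hiff2.mp hh, h⟩⟩
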